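/- arXiv:1012.6008 — 4 statements merged into one kernel-verified Lean document; each statement's English description precedes it below -/
import Mathlib

section
/- Let f and g be exponential formal power series over a commutative Q-algebra with g(0)=0, where f(t) = 1 + Σ_{n≥1} a_n t^n/n! and g(t) = Σ_{n≥1} g_n t^n/n!. Then the n-th coefficient h_n (times n!) of the composition f∘g satisfies Faà di Bruno's formula: h_n = Σ_{λ ⊢ n} (n!/(m(λ)! λ!)) a_{ℓ(λ)} g_λ, where the sum is over integer partitions λ = (1^{r_1} 2^{r_2} ...) of n, ℓ(λ) = r_1+r_2+... is the number of parts, m(λ)! = r_1! r_2! ..., λ! = (1!)^{r_1}(2!)^{r_2}..., and g_λ = g_1^{r_1} g_2^{r_2} .... -/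
open Nat

private lemma mono_mul {R : Type*} [CommRing R] (a b : ℕ) (x y : R) :
    PowerSeries.monomial a x * PowerSeries.monomial b y
      = PowerSeries.monomial (a + b) (x * y) := by
  have h : ∀ (n : ℕ) (r : R), PowerSeries.monomial n r
      = MvPowerSeries.monomial (Finsupp.single PUnit.unit n) r := fun _ _ => rfl
  rw [h, h, h, MvPowerSeries.monomial_mul_monomial, Finsupp.single_add]

private lemma multiset_prod_monomial {R : Type*} [CommRing R] (c : ℕ → R) (m : Multiset ℕ) :
    (m.map fun j => (PowerSeries.monomial j) (c j)).prod
      = (PowerSeries.monomial m.sum) (m.map c).prod := by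
  induction m using Multiset.induction_on with
  | empty => simp
  | cons a s ih => simp [ih, mono_mul]

private lemma multiset_prod_smul {R : Type*} [CommRing R] [Algebra ℚ R] (d : ℕ → ℚ) (g : ℕ → R)
    (m : Multiset ℕ) :
    (m.map fun j => d j • g j).prod = (m.map d).prod • (m.map g).prod := by
  induction m using Multiset.induction_on with
  | empty => simp
  | cons a s ih =>
      simp only [Multiset.map_cons, Multiset.prod_cons, ih, smul_mul_smul_comm]

private lemma multinomial_cast (m : Multiset ℕ) :
    ((m.countPerms : ℚ)) * ∏ j ∈ m.toFinset, ((m.count j)! : ℚ) = (m.card ! : ℚ) := by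
  have h := Nat.multinomial_spec m.toFinset m.count
  rw [Multiset.toFinset_sum_count_eq] at h
  have h2 : m.countPerms = Nat.multinomial m.toFinset m.count := by
    rw [Multiset.countPerms, Finsupp.multinomial_eq]
    rfl
  rw [h2]
  push_cast [← h]
  ring

/-- **Univariate Faà di Bruno's formula** for exponential generating functions.
`G` is the EGF of `g` (with `g 0 = 0`), `H = f ∘ G` is the composition with the EGF
`f` of `a` (with `a 0 = 1`), computed coefficientwise as `∑ k, (a k / k!) ⬝ coeff n (G ^ k)`
(the sum may be truncated at `k = n` since `G` has zero constant term). Then the `n`-th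
coefficient `h n` (times `n!`) of `H` is given by the sum over integer partitions `λ ⊢ n` of
`(n! / (m(λ)! λ!)) · a (ℓ λ) · g_λ`. -/
theorem stmt1 {R : Type*} [CommRing R] [Algebra ℚ R]
    (a g : ℕ → R) (ha : a 0 = 1) (hg : g 0 = 0)
    (G : PowerSeries R) (hG : G = PowerSeries.mk fun n => ((n ! : ℚ)⁻¹) • g n)
    (H : PowerSeries R)
    (hH : H = PowerSeries.mk fun n =>
      ∑ k ∈ Finset.range (n + 1), ((k ! : ℚ)⁻¹) • (a k * PowerSeries.coeff n (G ^ k)))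
    (n : ℕ) :
    (n ! : ℚ) • PowerSeries.coeff n H =
      ∑ p : Nat.Partition n,
        ((n ! : ℚ) /
            ((∏ j ∈ p.parts.toFinset, ((p.parts.count j)! : ℚ)) *
              ((p.parts.map fun j => (j ! : ℚ)).prod))) •
          (a p.parts.card * (p.parts.map g).prod) := by
  classical
  set c : ℕ → R := fun j => ((j ! : ℚ)⁻¹) • g j with hc
  set T : PowerSeries R :=
    ∑ j ∈ Finset.range (n + 1), PowerSeries.monomial j (c j) with hT
  have hcoeffT : ∀ i ≤ n, PowerSeries.coeff i T = c i := by
    intro i hi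
    rw [hT, map_sum]
    simp only [PowerSeries.coeff_monomial]
    rw [Finset.sum_ite_eq, if_pos (Finset.mem_range.2 (Nat.lt_succ_of_le hi))]
  have hGT : ∀ k, PowerSeries.coeff n (G ^ k) = PowerSeries.coeff n (T ^ k) := by
    intro k
    rw [PowerSeries.coeff_pow, PowerSeries.coeff_pow]
    refine Finset.sum_congr rfl fun l hl => Finset.prod_congr rfl fun i hi => ?_
    rw [Finset.mem_finsuppAntidiag] at hl
    have hli : l i ≤ n := by
      rw [← hl.1]
      exact Finset.single_le_sum (f := fun j => l j) (fun _ _ => Nat.zero_le _) hi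
    rw [hG, PowerSeries.coeff_mk, hcoeffT _ hli]
  have key : ∀ k, PowerSeries.coeff n (G ^ k)
      = ∑ m ∈ (Finset.range (n + 1)).sym k,
          if (m : Multiset ℕ).sum = n
          then ((m : Multiset ℕ).countPerms : R) * ((m : Multiset ℕ).map c).prod
          else 0 := by
    intro k
    rw [hGT k, hT, Finset.sum_pow, map_sum]
    refine Finset.sum_congr rfl fun m _ => ?_
    rw [multiset_prod_monomial, ← nsmul_eq_mul, map_nsmul, PowerSeries.coeff_monomial]
    simp only [smul_ite, smul_zero, nsmul_eq_mul, eq_comm]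
    rfl
  -- main computation
  rw [hH, PowerSeries.coeff_mk, Finset.smul_sum]
  have step : ∀ k ∈ Finset.range (n + 1),
      (n ! : ℚ) • (((k ! : ℚ)⁻¹) • (a k * PowerSeries.coeff n (G ^ k)))
        = ∑ m ∈ (Finset.range (n + 1)).sym k,
            (if (m : Multiset ℕ).sum = n then
              ((n ! : ℚ) * ((k ! : ℚ))⁻¹ * ((m : Multiset ℕ).countPerms : ℚ)
                  * (((m : Multiset ℕ)).map fun j => ((j ! : ℚ))⁻¹).prod)
                • (a k * ((m : Multiset ℕ).map g).prod)
            else 0) := by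
    intro k _
    rw [key k, Finset.mul_sum, Finset.smul_sum, Finset.smul_sum]
    refine Finset.sum_congr rfl fun m _ => ?_
    simp only [mul_ite, mul_zero, smul_ite, smul_zero]
    split
    · rw [hc, multiset_prod_smul]
      rw [show (((m : Multiset ℕ).countPerms : R))
          = algebraMap ℚ R ((m : Multiset ℕ).countPerms : ℚ) by simp]
      rw [← Algebra.smul_def, mul_smul_comm, mul_smul_comm, smul_smul, smul_smul, smul_smul]
    · rfl
  rw [Finset.sum_congr rfl step]
  rw [Finset.sum_sigma']
  rw [← Finset.sum_filter_of_ne (p := fun x =>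
      (x.2 : Multiset ℕ).sum = n ∧ (0 : ℕ) ∉ (x.2 : Multiset ℕ))
    (by
      rintro ⟨k, m⟩ hx hne
      by_contra hcon
      apply hne
      rw [not_and_or] at hcon
      rcases hcon with h1 | h1
      · rw [if_neg h1]
      · rw [not_not] at h1
        have : ((m : Multiset ℕ).map g).prod = 0 :=
          Multiset.prod_eq_zero (by
            rw [← hg]; exact Multiset.mem_map_of_mem g h1)
        simp [this])]
  refine Finset.sum_bij'
    (i := fun x hx => (⟨(x.2 : Multiset ℕ),
      fun {i} hi => Nat.pos_of_ne_zero (fun h0 => ((Finset.mem_filter.1 hx).2.2 (h0 ▸ hi))),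
      (Finset.mem_filter.1 hx).2.1⟩ : Nat.Partition n))
    (j := fun p _ => ⟨p.parts.card, ⟨p.parts, rfl⟩⟩)
    (hi := fun x hx => Finset.mem_univ _)
    (hj := ?_) (left_neg := ?_) (right_neg := ?_) (h := ?_)
  · intro p _
    rw [Finset.mem_filter]
    refine ⟨Finset.mem_sigma.2 ⟨?_, ?_⟩, ?_, ?_⟩
    · rw [Finset.mem_range, Nat.lt_succ_iff]
      calc p.parts.card = p.parts.card • 1 := by simp
        _ ≤ p.parts.sum := Multiset.card_nsmul_le_sum (fun x hx => p.parts_pos hx)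
        _ = n := p.parts_sum
    · rw [Finset.mem_sym_iff]
      intro b hb
      rw [Finset.mem_range, Nat.lt_succ_iff]
      calc b ≤ p.parts.sum := Multiset.single_le_sum (fun _ _ => Nat.zero_le _) _ hb
        _ = n := p.parts_sum
    · exact p.parts_sum
    · intro h0
      exact absurd (p.parts_pos h0) (lt_irrefl 0)
  · rintro ⟨k, m⟩ hx
    rcases m with ⟨ms, hms⟩
    subst hms
    rfl
  · intro p _
    rfl
  · rintro ⟨k, m⟩ hx
    rw [Finset.mem_filter] at hx
    obtain ⟨hmem, hsum, h0⟩ := hx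
    rw [if_pos hsum]
    have hcard : (m : Multiset ℕ).card = k := m.2
    simp only [hcard]
    congr 1
    have hmn := multinomial_cast (m : Multiset ℕ)
    rw [hcard] at hmn
    have hcount : (0:ℚ) < ∏ j ∈ (m : Multiset ℕ).toFinset, (((m : Multiset ℕ).count j)! : ℚ) := by
      positivity
    have hfac : (0:ℚ) < ((m : Multiset ℕ).map fun j => (j ! : ℚ)).prod := by
      apply Multiset.prod_pos
      intro x hx
      obtain ⟨j, _, rfl⟩ := Multiset.mem_map.1 hx
      positivity
    rw [Multiset.prod_map_inv]
    rw [div_eq_mul_inv, mul_inv]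
    field_simp
    rw [← hmn]
end

section
/- Let F(t₁,...,tₙ) = 1 + Σ_{i>0} g_i t^i/i! be a multivariate exponential power series over a Q-algebra with constant term 1, and let m be a positive integer. Then the coefficient of t^i/i! in F^m equals Σ over partitions λ of the multi-index i of ((m)_{ℓ(λ)} / (m(λ)! λ!)) · i! · g_λ, where a partition λ of i is a multiset of nonzero multi-indices {λ₁^{r₁}, λ₂^{r₂},...} (λ₁ < λ₂ < ... in lexicographic order) with Σ r_j λ_j = i, ℓ(λ) = Σ r_j, (m)_k = m(m-1)···(m-k+1) is the falling factorial, m(λ)! = r₁! r₂! ···, λ! = (λ₁!)^{r₁}(λ₂!)^{r₂}···, and g_λ = g_{λ₁}^{r₁} g_{λ₂}^{r₂}···. -/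
open Nat

section Helpers

lemma coeff_pow_congr {σ R : Type*} [CommSemiring R] [DecidableEq σ]
    {F F' : MvPowerSeries σ R} {i : σ →₀ ℕ}
    (h : ∀ j ≤ i, MvPowerSeries.coeff j F = MvPowerSeries.coeff j F') (m : ℕ) :
    MvPowerSeries.coeff i (F ^ m) = MvPowerSeries.coeff i (F' ^ m) := by
  rw [MvPowerSeries.coeff_pow, MvPowerSeries.coeff_pow]
  refine Finset.sum_congr rfl fun l hl => Finset.prod_congr rfl fun t ht => ?_
  rw [Finset.mem_finsuppAntidiag] at hl
  refine h _ ?_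
  rw [← hl.1]
  exact Finset.single_le_sum (f := fun j => l j) (fun j _ => _root_.zero_le) ht

lemma prod_map_monomial {σ R : Type*} [CommSemiring R] (P : Multiset (σ →₀ ℕ))
    (c : (σ →₀ ℕ) → R) :
    (P.map fun j => (MvPowerSeries.monomial j (c j))).prod =
      MvPowerSeries.monomial P.sum (P.map c).prod := by
  induction P using Multiset.induction with
  | empty => simp [MvPowerSeries.monomial_zero_one]
  | cons a s ih => simp [ih, MvPowerSeries.monomial_mul_monomial]

lemma prod_map_smul {σ R : Type*} [CommRing R] [Algebra ℚ R] (P : Multiset (σ →₀ ℕ))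
    (a : (σ →₀ ℕ) → ℚ) (x : (σ →₀ ℕ) → R) :
    (P.map fun p => a p • x p).prod = (P.map a).prod • (P.map x).prod := by
  induction P using Multiset.induction with
  | empty => simp
  | cons b s ih => simp [ih, smul_smul, smul_mul_smul_comm, mul_comm]

lemma coeff_pow_sym {σ R : Type*} [CommSemiring R] [DecidableEq σ]
    (F : MvPowerSeries σ R) (m : ℕ) (i : σ →₀ ℕ) :
    MvPowerSeries.coeff i (F ^ m) =
      ∑ k ∈ ((Finset.Iic i).sym m).filter (fun k => k.1.sum = i),
        (k : Multiset (σ →₀ ℕ)).countPerms •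
          ((k : Multiset (σ →₀ ℕ)).map fun j => MvPowerSeries.coeff j F).prod := by
  set c : (σ →₀ ℕ) → R := fun j => MvPowerSeries.coeff j F with hc
  set F' : MvPowerSeries σ R := ∑ j ∈ Finset.Iic i, MvPowerSeries.monomial j (c j) with hF'
  have h1 : MvPowerSeries.coeff i (F ^ m) = MvPowerSeries.coeff i (F' ^ m) := by
    refine coeff_pow_congr (fun j hj => ?_) m
    rw [hF', map_sum]
    simp_rw [MvPowerSeries.coeff_monomial]
    rw [Finset.sum_eq_single j (fun b _ hb => if_neg (fun hh => hb hh.symm))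
      (fun hns => absurd (Finset.mem_Iic.mpr hj) hns), if_pos rfl]
  rw [h1, hF', Finset.sum_pow, map_sum]
  rw [Finset.sum_filter]
  refine Finset.sum_congr rfl fun k _ => ?_
  rw [prod_map_monomial, ← nsmul_eq_mul, map_nsmul, MvPowerSeries.coeff_monomial]
  split_ifs with h1 h2 h2 <;>
    first
      | rfl
      | (exact absurd h1.symm h2)
      | (exact absurd h2.symm h1)
      | (exact smul_zero _)

lemma mult_spec {α : Type*} [DecidableEq α] (k : Multiset α) :
    (∏ x ∈ k.toFinset, (k.count x)!) * k.countPerms = (Multiset.card k)! := by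
  have := Nat.multinomial_spec k.toFinset (fun x => k.count x)
  rw [Multiset.toFinset_sum_count_eq] at this
  simp only [Multiset.countPerms, Finsupp.multinomial_eq, Multiset.toFinsupp_support]
  exact this

lemma filter_split {α : Type*} [DecidableEq α] [Zero α] (M : Multiset α) :
    M = M.filter (· ≠ 0) +
      Multiset.replicate (Multiset.card M - Multiset.card (M.filter (· ≠ 0))) 0 := by
  conv_lhs => rw [← Multiset.filter_add_not (fun x => x ≠ 0) M]
  congr 1
  rw [Multiset.eq_replicate]
  constructor
  · have : Multiset.card (M.filter (· ≠ 0)) + Multiset.card (M.filter (fun x => ¬ x ≠ 0))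
        = Multiset.card M := by
      rw [← Multiset.card_add, Multiset.filter_add_not]
    omega
  · intro b hb
    have := Multiset.of_mem_filter hb
    simpa using this

lemma mult_replicate_zero {α : Type*} [DecidableEq α] [Zero α] (P : Multiset α)
    (hP : (0 : α) ∉ P) (z : ℕ) :
    (z ! * ∏ x ∈ P.toFinset, (P.count x)!) *
      (P + Multiset.replicate z 0).countPerms = (Multiset.card P + z)! := by
  have h := mult_spec (P + Multiset.replicate z 0)
  rcases Nat.eq_zero_or_pos z with rfl | hz
  · simpa using h
  · have h0 : (0:α) ∉ P.toFinset := by simp [hP]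
    have hto : (P + Multiset.replicate z 0).toFinset = insert 0 P.toFinset := by
      rw [Multiset.toFinset_add, Multiset.toFinset_replicate, if_neg (by omega)]
      rw [Finset.union_comm, Finset.insert_eq]
    rw [hto, Finset.prod_insert h0] at h
    rw [show Multiset.count 0 (P + Multiset.replicate z 0) = z by
        simp [Multiset.count_replicate, Multiset.count_eq_zero_of_notMem hP]] at h
    rw [Finset.prod_congr rfl (fun x hx => by
        rw [show Multiset.count x (P + Multiset.replicate z 0) = Multiset.count x P by
          have hx0 : ¬ (0:α) = x := fun hh => h0 (hh ▸ hx)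
          simp [Multiset.count_replicate, hx0]])] at h
    simpa [mul_assoc] using h

end Helpers

/-- The coefficient of `t^i / i!` in the `m`-th power of a multivariate exponential power
series `F = 1 + ∑_{i > 0} g_i t^i / i!` with constant term `1` equals the sum over partitions
`λ` of the multi-index `i` (multisets of nonzero multi-indices with `λ.sum = i`) of
`((m)_{ℓ(λ)} / (m(λ)! λ!)) · i! · g_λ`, where `(m)_k` is the falling factorial,
`m(λ)! = ∏ r_j!` (product of factorials of multiplicities), `λ! = ∏ (λ_j!)^{r_j}` and
`g_λ = ∏ g_{λ_j}^{r_j}`. -/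
theorem stmt4 {R : Type*} [CommRing R] [Algebra ℚ R] {n : ℕ}
    (g : (Fin n →₀ ℕ) → R)
    (F : MvPowerSeries (Fin n) R)
    (hF : ∀ i : Fin n →₀ ℕ,
      MvPowerSeries.coeff i F =
        if i = 0 then 1 else (∏ j, ((i j)! : ℚ))⁻¹ • g i)
    (m : ℕ) (hm : 1 ≤ m) (i : Fin n →₀ ℕ) :
    (∏ j, ((i j)! : ℚ)) • MvPowerSeries.coeff i (F ^ m) =
      ∑ᶠ (P : Multiset (Fin n →₀ ℕ)) (_ : (0 : Fin n →₀ ℕ) ∉ P ∧ P.sum = i),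
        (((m.descFactorial P.card : ℚ) * ∏ j, ((i j)! : ℚ)) /
            ((∏ x ∈ P.toFinset, ((P.count x)! : ℚ)) *
              (P.map fun p => ∏ j, ((p j)! : ℚ)).prod)) •
          (P.map g).prod := by
  classical
  set c : (Fin n →₀ ℕ) → R := fun j => MvPowerSeries.coeff j F with hc
  set I : ℚ := ∏ j, ((i j)! : ℚ) with hI
  set w : (Fin n →₀ ℕ) → ℚ := fun p => ∏ j, ((p j)! : ℚ) with hw
  set f : Multiset (Fin n →₀ ℕ) → R := fun P =>
    (((m.descFactorial (Multiset.card P) : ℚ) * I) /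
        ((∏ x ∈ P.toFinset, ((Multiset.count x P)! : ℚ)) * (P.map w).prod)) •
      (P.map g).prod with hf
  set K := ((Finset.Iic i).sym m).filter
    (fun k : Sym (Fin n →₀ ℕ) m => (k : Multiset (Fin n →₀ ℕ)).sum = i) with hK
  set ψ : Sym (Fin n →₀ ℕ) m → Multiset (Fin n →₀ ℕ) :=
    fun k => (k : Multiset (Fin n →₀ ℕ)).filter (· ≠ 0) with hψ
  set T := K.image ψ with hT
  -- basic facts about ψ
  have hsplit : ∀ k : Sym (Fin n →₀ ℕ) m,
      (k : Multiset (Fin n →₀ ℕ)) = ψ k + Multiset.replicate (m - Multiset.card (ψ k)) 0 := by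
    intro k
    have h := filter_split (k : Multiset (Fin n →₀ ℕ))
    rwa [Sym.card_coe] at h
  have hψcard : ∀ k : Sym (Fin n →₀ ℕ) m, Multiset.card (ψ k) ≤ m := by
    intro k
    rw [← Sym.card_coe (s := k)]
    exact Multiset.card_le_card (Multiset.filter_le _ _)
  have hψ0 : ∀ k : Sym (Fin n →₀ ℕ) m, (0 : Fin n →₀ ℕ) ∉ ψ k := by
    intro k h
    simpa using Multiset.of_mem_filter h
  have hψsum : ∀ k ∈ K, (ψ k).sum = i := by
    intro k hk
    have hk' := (Finset.mem_filter.mp hk).2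
    rw [hsplit k] at hk'
    simpa using hk'
  have hinj : ∀ k1 ∈ K, ∀ k2 ∈ K, ψ k1 = ψ k2 → k1 = k2 := by
    intro k1 _ k2 _ he
    have e1 := hsplit k1
    have e2 := hsplit k2
    refine Subtype.ext ?_
    calc (k1 : Multiset (Fin n →₀ ℕ))
        = ψ k1 + Multiset.replicate (m - Multiset.card (ψ k1)) 0 := e1
      _ = ψ k2 + Multiset.replicate (m - Multiset.card (ψ k2)) 0 := by rw [he]
      _ = (k2 : Multiset (Fin n →₀ ℕ)) := e2.symm
  -- the key termwise identity
  have key : ∀ k ∈ K,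
      I • ((k : Multiset (Fin n →₀ ℕ)).countPerms •
        ((k : Multiset (Fin n →₀ ℕ)).map c).prod) = f (ψ k) := by
    intro k hk
    have h0P : (0 : Fin n →₀ ℕ) ∉ ψ k := hψ0 k
    have hcard : Multiset.card (ψ k) ≤ m := hψcard k
    have hz : (k : Multiset (Fin n →₀ ℕ))
        = ψ k + Multiset.replicate (m - Multiset.card (ψ k)) 0 := hsplit k
    set P := ψ k with hPdef
    set z := m - Multiset.card P with hzdef
    set C : ℚ := ∏ x ∈ P.toFinset, ((Multiset.count x P)! : ℚ) with hC
    set B : ℚ := (P.map w).prod with hB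
    set A : ℚ := (P.map fun p => (w p)⁻¹).prod with hA
    -- multinomial computation
    have hmnN : (∏ x ∈ P.toFinset, (Multiset.count x P)!) *
        (k : Multiset (Fin n →₀ ℕ)).countPerms = m.descFactorial (Multiset.card P) := by
      have e1 := mult_replicate_zero P h0P z
      rw [← hz] at e1
      have e2 := Nat.factorial_mul_descFactorial hcard
      have hzm : Multiset.card P + z = m := by omega
      rw [hzm] at e1
      have : z ! * ((∏ x ∈ P.toFinset, (Multiset.count x P)!) *
          (k : Multiset (Fin n →₀ ℕ)).countPerms) = z ! * m.descFactorial (Multiset.card P) := by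
        rw [← mul_assoc, e1, ← e2]
      exact Nat.eq_of_mul_eq_mul_left (Nat.factorial_pos z) this
    have hmn : C * ((k : Multiset (Fin n →₀ ℕ)).countPerms : ℚ)
        = (m.descFactorial (Multiset.card P) : ℚ) := by
      rw [hC]
      push_cast [← hmnN]
      ring
    -- product computation
    have hwne : ∀ p, w p ≠ 0 := by
      intro p
      rw [hw]
      positivity
    have hCne : C ≠ 0 := by
      rw [hC]
      positivity
    have hBne : B ≠ 0 := by
      rw [hB]
      refine Multiset.prod_ne_zero ?_
      intro h0
      obtain ⟨p, _, hp⟩ := Multiset.mem_map.mp h0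
      exact hwne p hp
    have hAB : A * B = 1 := by
      rw [hA, hB, ← Multiset.prod_map_mul]
      rw [Multiset.map_congr rfl (fun p _ => inv_mul_cancel₀ (hwne p))]
      simp
    have hc0 : c 0 = 1 := by
      rw [hc]
      simpa using (hF 0).trans (if_pos rfl)
    have hmapc : P.map c = P.map (fun p => (w p)⁻¹ • g p) := by
      refine Multiset.map_congr rfl (fun p hp => ?_)
      rw [hc]
      simp only
      rw [hF p, if_neg (fun h => h0P (by rwa [h] at hp)), hw]
    have hprod : ((k : Multiset (Fin n →₀ ℕ)).map c).prod = A • (P.map g).prod := by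
      rw [hz, Multiset.map_add, Multiset.prod_add, Multiset.map_replicate, hc0,
        Multiset.prod_replicate, one_pow, mul_one, hmapc, prod_map_smul, hA]
    -- put it together
    have hA' : A = B⁻¹ := eq_inv_of_mul_eq_one_left hAB
    have hscal : I * ((k : Multiset (Fin n →₀ ℕ)).countPerms : ℚ) * A =
        ((m.descFactorial (Multiset.card P)) : ℚ) * I / (C * B) := by
      rw [eq_div_iff (mul_ne_zero hCne hBne), ← hmn, hA']
      field_simp
    rw [hprod, ← Nat.cast_smul_eq_nsmul ℚ, smul_smul, smul_smul, hscal]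
  -- rewrite both sides
  rw [coeff_pow_sym F m i, Finset.smul_sum]
  have hfin : ∀ P : Multiset (Fin n →₀ ℕ),
      (∑ᶠ (_ : (0 : Fin n →₀ ℕ) ∉ P ∧ P.sum = i), f P)
        = if ((0 : Fin n →₀ ℕ) ∉ P ∧ P.sum = i) then f P else 0 := fun P => finsum_eq_if
  rw [finsum_congr hfin]
  have hsupp : (Function.support fun P : Multiset (Fin n →₀ ℕ) =>
      if ((0 : Fin n →₀ ℕ) ∉ P ∧ P.sum = i) then f P else 0) ⊆ ↑T := by
    intro P hP
    simp only [Function.mem_support] at hP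
    split_ifs at hP with hcond
    · obtain ⟨hP0, hPsum⟩ := hcond
      have hcard : Multiset.card P ≤ m := by
        by_contra hlt
        apply hP
        rw [hf]
        simp only
        rw [Nat.descFactorial_eq_zero_iff_lt.mpr (by omega)]
        simp
      have hkcard : Multiset.card (P + Multiset.replicate (m - Multiset.card P) 0) = m := by
        rw [Multiset.card_add, Multiset.card_replicate]
        omega
      refine Finset.mem_coe.mpr (Finset.mem_image.mpr
        ⟨Sym.mk (P + Multiset.replicate (m - Multiset.card P) 0) hkcard, ?_, ?_⟩)
      · rw [hK, Finset.mem_filter]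
        constructor
        · rw [Finset.mem_sym_iff]
          intro a ha
          rw [Finset.mem_Iic]
          rcases Multiset.mem_add.mp ha with h | h
          · rw [← hPsum]
            exact Multiset.le_sum_of_mem h
          · rw [Multiset.eq_of_mem_replicate h]
            exact _root_.zero_le
        · show (P + Multiset.replicate (m - Multiset.card P) 0).sum = i
          simp [hPsum]
      · rw [hψ]
        simp only
        show Multiset.filter (fun x => x ≠ 0)
          (P + Multiset.replicate (m - Multiset.card P) 0) = P
        rw [Multiset.filter_add]
        have h1 : Multiset.filter (fun x => x ≠ 0) P = P := by
          rw [Multiset.filter_eq_self]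
          intro a ha h0
          exact hP0 (by rwa [h0] at ha)
        rw [h1, add_eq_left]
        simp only [Multiset.filter_eq_nil]
        intro a ha
        simp [Multiset.eq_of_mem_replicate ha]
    · exact absurd rfl hP
  rw [finsum_eq_sum_of_support_subset _ hsupp]
  have hTcond : ∀ P ∈ T, ((0 : Fin n →₀ ℕ) ∉ P ∧ P.sum = i) := by
    intro P hPT
    obtain ⟨k, hkK, rfl⟩ := Finset.mem_image.mp hPT
    exact ⟨hψ0 k, hψsum k hkK⟩
  rw [Finset.sum_congr rfl (fun P hPT => if_pos (hTcond P hPT))]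
  rw [hT, Finset.sum_image hinj]
  exact Finset.sum_congr rfl key
end

section
/- Let f(s) = 1 + Σ_{k≥1} a_k s^k/k! be a univariate exponential power series over a Q-algebra and let G(t₁,...,tₙ) = 1 + Σ_{i>0} g_i t^i/i! be a multivariate exponential power series with constant term 1. Then the coefficient of t^i/i! in the composition f(G(t) − 1) equals Σ over partitions λ of the multi-index i of (i! / (m(λ)! λ!)) · a_{ℓ(λ)} · g_λ. -/
open Nat

section Helpers

private lemma prod_fact_erase {α : Type*} [DecidableEq α] (P : Multiset α) {x : α} (hx : x ∈ P) :
    (P.count x : ℚ) * ∏ y ∈ (P.erase x).toFinset, (((P.erase x).count y)! : ℚ)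
      = ∏ y ∈ P.toFinset, ((P.count y)! : ℚ) := by
  have hsub : (P.erase x).toFinset ⊆ P.toFinset :=
    Multiset.toFinset_subset.mpr (P.erase_subset x)
  have h1 : ∏ y ∈ (P.erase x).toFinset, (((P.erase x).count y)! : ℚ)
      = ∏ y ∈ P.toFinset, (((P.erase x).count y)! : ℚ) := by
    apply Finset.prod_subset hsub
    intro y _ hy
    have : (P.erase x).count y = 0 := by
      rw [Multiset.count_eq_zero]
      simpa [Multiset.mem_toFinset] using hy
    simp [this]
  have hxF : x ∈ P.toFinset := Multiset.mem_toFinset.mpr hx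
  rw [h1, ← Finset.mul_prod_erase _ _ hxF, ← Finset.mul_prod_erase _ (fun y => ((P.count y)! : ℚ)) hxF]
  have h2 : ∏ y ∈ P.toFinset.erase x, (((P.erase x).count y)! : ℚ)
      = ∏ y ∈ P.toFinset.erase x, ((P.count y)! : ℚ) := by
    apply Finset.prod_congr rfl
    intro y hy
    rw [Multiset.count_erase_of_ne (Finset.ne_of_mem_erase hy)]
  rw [h2, Multiset.count_erase_self, ← mul_assoc]
  congr 1
  have hc : 0 < P.count x := Multiset.count_pos.mpr hx
  rw [← Nat.mul_factorial_pred hc.ne']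
  push_cast
  ring

variable {α : Type*} [DecidableEq α]

private def fiber (k : ℕ) (P : Multiset α) : Finset (Fin k → α) :=
  (Fintype.piFinset fun _ => P.toFinset).filter (fun f => (List.ofFn f : Multiset α) = P)

private lemma mem_fiber {k : ℕ} {P : Multiset α} {f : Fin k → α} :
    f ∈ fiber k P ↔ (List.ofFn f : Multiset α) = P := by
  simp only [fiber, Finset.mem_filter, Fintype.mem_piFinset, and_iff_right_iff_imp]
  intro h t
  rw [Multiset.mem_toFinset, ← h]
  exact Multiset.mem_coe.mpr (List.mem_ofFn.mpr ⟨t, rfl⟩)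

private lemma card_fiber_mul (k : ℕ) : ∀ (P : Multiset α), Multiset.card P = k →
    ((fiber k P).card : ℚ) * ∏ x ∈ P.toFinset, ((P.count x)! : ℚ) = (k ! : ℚ) := by
  induction k with
  | zero =>
    intro P hP
    rw [Multiset.card_eq_zero] at hP
    subst hP
    have h0 : fiber 0 (0 : Multiset α) = {![]} := by
      ext f
      constructor
      · intro _
        simp only [Finset.mem_singleton]
        funext t
        exact t.elim0
      · intro _
        rw [mem_fiber, List.ofFn_zero]
        rfl
    simp [h0]
  | succ k ih =>
    intro P hP
    have hmaps : ∀ f ∈ fiber (k+1) P, f 0 ∈ P.toFinset := by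
      intro f hf
      rw [mem_fiber] at hf
      rw [Multiset.mem_toFinset, ← hf]
      exact Multiset.mem_coe.mpr (List.mem_ofFn.mpr ⟨0, rfl⟩)
    rw [Finset.card_eq_sum_card_fiberwise hmaps]
    have hcard : ∀ x ∈ P.toFinset,
        (((fiber (k+1) P).filter (fun f => f 0 = x)).card : ℚ)
        = ((fiber k (P.erase x)).card : ℚ) := by
      intro x hxF
      have hx : x ∈ P := Multiset.mem_toFinset.mp hxF
      congr 1
      refine Finset.card_bij' (fun f _ => Fin.tail f) (fun f _ => Fin.cons x f) ?_ ?_ ?_ ?_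
      · intro f hf
        simp only [Finset.mem_filter, mem_fiber] at hf
        obtain ⟨hf1, hf2⟩ := hf
        rw [List.ofFn_succ, hf2] at hf1
        have h3 : (x ::ₘ (List.ofFn (Fin.tail f) : Multiset α)) = P := hf1
        have h4 : P.erase x = (List.ofFn (Fin.tail f) : Multiset α) := by
          rw [← h3, Multiset.erase_cons_head]
        rw [mem_fiber, h4]
      · intro f hf
        rw [mem_fiber] at hf
        simp only [Finset.mem_filter, mem_fiber]
        constructor
        · rw [List.ofFn_succ]
          simp only [Fin.cons_zero, Fin.cons_succ]
          show (x ::ₘ (List.ofFn f : Multiset α)) = P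
          rw [hf, Multiset.cons_erase hx]
        · simp
      · intro f hf
        simp only [Finset.mem_filter] at hf
        obtain ⟨-, h2⟩ := hf
        show Fin.cons x (Fin.tail f) = f
        subst h2
        exact Fin.cons_self_tail f
      · intro f _
        exact Fin.tail_cons (α := fun _ : Fin (k+1) => α) x f
    rw [Nat.cast_sum, Finset.sum_mul]
    have key : ∀ x ∈ P.toFinset,
        (((fiber (k+1) P).filter (fun f => f 0 = x)).card : ℚ) *
          ∏ y ∈ P.toFinset, ((P.count y)! : ℚ)
        = (P.count x : ℚ) * (k ! : ℚ) := by
      intro x hxF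
      have hx : x ∈ P := Multiset.mem_toFinset.mp hxF
      rw [hcard x hxF, ← prod_fact_erase P hx]
      have hcardP : Multiset.card (P.erase x) = k := by
        rw [Multiset.card_erase_of_mem hx, hP]; rfl
      rw [mul_comm (P.count x : ℚ) (∏ y ∈ (P.erase x).toFinset, (((P.erase x).count y)! : ℚ)),
        ← mul_assoc, ih (P.erase x) hcardP]
      ring
    rw [Finset.sum_congr rfl key, ← Finset.sum_mul, ← Nat.cast_sum,
      Multiset.toFinset_sum_count_eq, hP]
    push_cast [Nat.factorial_succ]
    ring

private lemma prod_map_inv_smul {R : Type*} [CommRing R] [Algebra ℚ R] {β : Type*}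
    (w : β → ℚ) (g : β → R) (P : Multiset β) :
    (P.map fun p => (w p)⁻¹ • g p).prod = ((P.map w).prod)⁻¹ • (P.map g).prod := by
  induction P using Multiset.induction with
  | empty => simp
  | cons p P ih =>
    simp only [Multiset.map_cons, Multiset.prod_cons, ih, smul_mul_smul_comm, mul_inv]

private lemma ofFn_comp_val {β : Type*} (k : ℕ) (h : ℕ → β) :
    ((List.ofFn (fun t : Fin k => h t) : List β) : Multiset β) = (Multiset.range k).map h := by
  have : List.ofFn (fun t : Fin k => h t) = (List.range k).map h := by
    apply List.ext_getElem <;> simp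
  rw [this]
  rfl

private noncomputable def msFinsupp {M : Type*} [AddCommMonoid M] (P : Multiset M) : ℕ →₀ M :=
  Finsupp.onFinset (Finset.range (Multiset.card P)) (fun t => P.toList.getD t 0)
    (fun t h => by
      rw [Finset.mem_range]
      by_contra hlt
      push_neg at hlt
      exact h (List.getD_eq_default _ _ (by simpa [Multiset.length_toList] using hlt)))

private lemma support_msFinsupp {M : Type*} [AddCommMonoid M] (P : Multiset M) :
    (msFinsupp P).support ⊆ Finset.range (Multiset.card P) :=
  Finsupp.support_onFinset_subset

private lemma map_msFinsupp {M : Type*} [AddCommMonoid M] (P : Multiset M) :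
    (Multiset.range (Multiset.card P)).map ⇑(msFinsupp P) = P := by
  conv_rhs => rw [← P.coe_toList]
  have h1 : Multiset.range (Multiset.card P) = ↑(List.range (Multiset.card P)) := rfl
  rw [h1, Multiset.map_coe]
  congr 1
  apply List.ext_getElem
  · simp [Multiset.length_toList]
  · intro t h1 h2
    simp only [List.getElem_map, List.getElem_range, msFinsupp, Finsupp.onFinset_apply]
    rw [List.getD_eq_getElem]

private lemma card_le_deg {n : ℕ} {P : Multiset (Fin n →₀ ℕ)} (h0 : (0 : Fin n →₀ ℕ) ∉ P) :
    Multiset.card P ≤ ∑ j, P.sum j := by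
  have hdeg : ∀ m : Fin n →₀ ℕ, m ≠ 0 → 1 ≤ ∑ j, m j := by
    intro m hm
    rw [Nat.one_le_iff_ne_zero]
    intro hz
    apply hm
    ext j
    exact (Finset.sum_eq_zero_iff.mp hz) j (Finset.mem_univ j)
  induction P using Multiset.induction with
  | empty => simp
  | cons p P ih =>
    have hp : p ≠ 0 := fun h => h0 (h ▸ Multiset.mem_cons_self p P)
    have h0' : (0 : Fin n →₀ ℕ) ∉ P := fun h => h0 (Multiset.mem_cons_of_mem h)
    rw [Multiset.card_cons, Multiset.sum_cons]
    calc Multiset.card P + 1 ≤ (∑ j, P.sum j) + 1 := Nat.add_le_add_right (ih h0') 1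
    _ ≤ (∑ j, P.sum j) + ∑ j, p j := by
        have := hdeg p hp; omega
    _ = ∑ j, (p + P.sum) j := by
        rw [← Finset.sum_add_distrib]
        apply Finset.sum_congr rfl
        intro j _
        simp [add_comm]

private lemma card_finsupp_fiber {n k : ℕ} (i : Fin n →₀ ℕ) (P : Multiset (Fin n →₀ ℕ))
    (hP0 : (0 : Fin n →₀ ℕ) ∉ P) (hPs : P.sum = i) (hPc : Multiset.card P = k) :
    ((Finset.finsuppAntidiag (Finset.range k) i).filter
        (fun l : ℕ →₀ (Fin n →₀ ℕ) =>
          (0 : Fin n →₀ ℕ) ∉ (Multiset.range k).map ⇑l ∧ (Multiset.range k).map ⇑l = P)).card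
      = (fiber k P).card := by
  have hsupp : ∀ (f : Fin k → (Fin n →₀ ℕ)) (t : ℕ),
      (if h : t < k then f ⟨t, h⟩ else 0) ≠ 0 → t ∈ Finset.range k := by
    intro f t ht
    rw [Finset.mem_range]
    by_contra hlt
    push_neg at hlt
    exact ht (dif_neg (not_lt.mpr hlt))
  refine Finset.card_bij' (fun l _ => fun t : Fin k => l t)
    (fun f _ => Finsupp.onFinset (Finset.range k)
      (fun t => if h : t < k then f ⟨t, h⟩ else 0) (hsupp f)) ?_ ?_ ?_ ?_
  · intro l hl
    simp only [Finset.mem_filter] at hl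
    rw [mem_fiber, ofFn_comp_val, hl.2.2]
  · intro f hf
    rw [mem_fiber] at hf
    have hfn : (fun t : Fin k => (if h : (t : ℕ) < k then f ⟨t, h⟩ else 0)) = f := by
      funext t
      rw [dif_pos t.isLt]
    have hmap : (Multiset.range k).map
        ⇑(Finsupp.onFinset (Finset.range k)
          (fun t => if h : t < k then f ⟨t, h⟩ else 0) (hsupp f)) = P := by
      rw [← ofFn_comp_val k]
      simp only [Finsupp.onFinset_apply]
      rw [hfn, hf]
    refine Finset.mem_filter.mpr ⟨?_, hmap ▸ hP0, hmap⟩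
    rw [Finset.mem_finsuppAntidiag]
    constructor
    · rw [Finset.sum_range]
      simp only [Finsupp.onFinset_apply]
      have : ∀ t : Fin k, (if h : (t:ℕ) < k then f ⟨t, h⟩ else 0) = f t := fun t => dif_pos t.isLt
      rw [Finset.sum_congr rfl (fun t _ => this t)]
      rw [← List.sum_ofFn, ← Multiset.sum_coe, hf, hPs]
    · exact Finsupp.support_onFinset_subset
  · intro l hl
    simp only [Finset.mem_filter, Finset.mem_finsuppAntidiag] at hl
    refine Finsupp.ext fun t => ?_
    simp only [Finsupp.onFinset_apply]
    by_cases h : t < k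
    · rw [dif_pos h]
    · rw [dif_neg h]
      by_cases hz : l t = 0
      · rw [hz]
      · exfalso
        have hts : t ∈ l.support := Finsupp.mem_support_iff.mpr hz
        have h2 := hl.1.2 hts
        rw [Finset.mem_range] at h2
        exact h h2
  · intro f _
    funext t
    simp only [Finsupp.onFinset_apply]
    rw [dif_pos t.isLt]

end Helpers

/-- **Multivariate Faà di Bruno formula (univariate composed with multivariate).**
Let `f(s) = 1 + ∑_{k ≥ 1} a_k s^k / k!` and let `G = 1 + ∑_{i > 0} g_i t^i / i!` be a
multivariate exponential power series with constant term `1`. The composition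
`H = f(G - 1)` is computed coefficientwise as `∑_k (a_k / k!) ⬝ coeff i ((G - 1)^k)`
(truncated at `k = |i|` since `G - 1` has zero constant term). Then the coefficient of
`t^i / i!` in `H` equals the sum over partitions `λ` of the multi-index `i` of
`(i! / (m(λ)! λ!)) · a_{ℓ(λ)} · g_λ`. -/
theorem stmt5 {R : Type*} [CommRing R] [Algebra ℚ R] {n : ℕ}
    (a : ℕ → R) (ha : a 0 = 1)
    (g : (Fin n →₀ ℕ) → R)
    (G : MvPowerSeries (Fin n) R)
    (hG : ∀ i : Fin n →₀ ℕ,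
      MvPowerSeries.coeff i G =
        if i = 0 then 1 else (∏ j, ((i j)! : ℚ))⁻¹ • g i)
    (H : MvPowerSeries (Fin n) R)
    (hH : ∀ i : Fin n →₀ ℕ,
      MvPowerSeries.coeff i H =
        ∑ k ∈ Finset.range ((∑ j, i j) + 1),
          ((k ! : ℚ)⁻¹) • (a k * MvPowerSeries.coeff i ((G - 1) ^ k)))
    (i : Fin n →₀ ℕ) :
    (∏ j, ((i j)! : ℚ)) • MvPowerSeries.coeff i H =
      ∑ᶠ (P : Multiset (Fin n →₀ ℕ)) (_ : (0 : Fin n →₀ ℕ) ∉ P ∧ P.sum = i),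
        ((∏ j, ((i j)! : ℚ)) /
            ((∏ x ∈ P.toFinset, ((P.count x)! : ℚ)) *
              (P.map fun p => ∏ j, ((p j)! : ℚ)).prod)) •
          (a P.card * (P.map g).prod) := by
  let c : (Fin n →₀ ℕ) → R := fun m => if m = 0 then 0 else (∏ j, ((m j)! : ℚ))⁻¹ • g m
  have hc : ∀ m, MvPowerSeries.coeff m (G - 1) = c m := by
    intro m
    rw [map_sub, hG m, MvPowerSeries.coeff_one]
    by_cases h : m = 0 <;> simp [c, h]
  let T : ℕ → Finset (Multiset (Fin n →₀ ℕ)) := fun k =>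
    ((Finset.finsuppAntidiag (Finset.range k) i).image
      (fun l : ℕ →₀ (Fin n →₀ ℕ) => (Multiset.range k).map ⇑l)).filter
      (fun P => (0 : Fin n →₀ ℕ) ∉ P)
  have hT : ∀ k, ∀ P ∈ T k, (0 : Fin n →₀ ℕ) ∉ P ∧ P.sum = i ∧ Multiset.card P = k := by
    intro k P hP
    simp only [T, Finset.mem_filter, Finset.mem_image] at hP
    obtain ⟨⟨l, hl, rfl⟩, h0⟩ := hP
    rw [Finset.mem_finsuppAntidiag] at hl
    refine ⟨h0, ?_, by simp⟩
    rw [← Finset.range_val, ← Finset.sum_eq_multiset_sum]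
    exact hl.1
  have hT' : ∀ P : Multiset (Fin n →₀ ℕ), (0 : Fin n →₀ ℕ) ∉ P → P.sum = i →
      P ∈ T (Multiset.card P) := by
    intro P h0 hs
    simp only [T, Finset.mem_filter, Finset.mem_image]
    refine ⟨⟨msFinsupp P, ?_, map_msFinsupp P⟩, h0⟩
    rw [Finset.mem_finsuppAntidiag]
    refine ⟨?_, support_msFinsupp P⟩
    rw [Finset.sum_eq_multiset_sum, Finset.range_val]
    rw [show Multiset.map (⇑(msFinsupp P)) (Multiset.range (Multiset.card P)) = P from
      map_msFinsupp P, hs]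
  have step1 : ∀ k, MvPowerSeries.coeff i ((G - 1) ^ k)
      = ∑ P ∈ T k, ((fiber k P).card) • (P.map c).prod := by
    intro k
    rw [MvPowerSeries.coeff_pow]
    have e1 : ∀ l : ℕ →₀ (Fin n →₀ ℕ),
        (∏ t ∈ Finset.range k, MvPowerSeries.coeff (l t) (G - 1))
          = (((Multiset.range k).map ⇑l).map c).prod := by
      intro l
      rw [Finset.prod_eq_multiset_prod, Finset.range_val, Multiset.map_map]
      exact congrArg Multiset.prod (Multiset.map_congr rfl fun t _ => hc (l t))
    rw [Finset.sum_congr rfl fun l _ => e1 l]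
    have hvan : ∀ l ∈ Finset.finsuppAntidiag (Finset.range k) i,
        (((Multiset.range k).map ⇑l).map c).prod ≠ 0 →
          (0 : Fin n →₀ ℕ) ∉ (Multiset.range k).map ⇑l := by
      intro l _ hne h0
      apply hne
      apply Multiset.prod_eq_zero
      have hc0 : c 0 = 0 := if_pos rfl
      exact hc0 ▸ Multiset.mem_map_of_mem c h0
    rw [← Finset.sum_filter_of_ne hvan]
    have hmaps : ∀ l ∈ (Finset.finsuppAntidiag (Finset.range k) i).filter
        (fun l : ℕ →₀ (Fin n →₀ ℕ) => (0 : Fin n →₀ ℕ) ∉ (Multiset.range k).map ⇑l),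
        (Multiset.range k).map ⇑l ∈ T k := by
      intro l hl
      rw [Finset.mem_filter] at hl
      exact Finset.mem_filter.mpr ⟨Finset.mem_image_of_mem _ hl.1, hl.2⟩
    rw [← Finset.sum_fiberwise_of_maps_to hmaps
      (fun l => (((Multiset.range k).map ⇑l).map c).prod)]
    apply Finset.sum_congr rfl
    intro P hP
    obtain ⟨h0, hs, hcard⟩ := hT k P hP
    rw [Finset.sum_congr rfl (fun l hl => by
      rw [(Finset.mem_filter.mp hl).2]), Finset.sum_const]
    congr 1
    rw [Finset.filter_filter]
    exact card_finsupp_fiber i P h0 hs hcard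
  have step2 : ∀ k ∈ Finset.range ((∑ j, i j) + 1),
      (∏ j, ((i j)! : ℚ)) • ((k ! : ℚ)⁻¹ • (a k * MvPowerSeries.coeff i ((G - 1) ^ k)))
        = ∑ P ∈ T k, ((∏ j, ((i j)! : ℚ)) /
            ((∏ x ∈ P.toFinset, ((P.count x)! : ℚ)) *
              (P.map fun p => ∏ j, ((p j)! : ℚ)).prod)) •
          (a P.card * (P.map g).prod) := by
    intro k _
    rw [step1 k, Finset.mul_sum, Finset.smul_sum, Finset.smul_sum]
    apply Finset.sum_congr rfl
    intro P hP
    obtain ⟨h0, hs, hcard⟩ := hT k P hP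
    subst hcard
    have hmapc : P.map c = P.map (fun p => (∏ j, ((p j)! : ℚ))⁻¹ • g p) := by
      apply Multiset.map_congr rfl
      intro p hp
      have hp0 : p ≠ 0 := fun h => h0 (h ▸ hp)
      simp only [c, if_neg hp0]
    rw [hmapc, prod_map_inv_smul (fun p => ∏ j, ((p j)! : ℚ)) g P]
    have hNQ := card_fiber_mul (Multiset.card P) P rfl
    have hm0 : (∏ x ∈ P.toFinset, ((P.count x)! : ℚ)) ≠ 0 :=
      Finset.prod_ne_zero_iff.mpr fun x _ => Nat.cast_ne_zero.mpr (Nat.factorial_ne_zero _)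
    have hq0 : (P.map fun p => ∏ j, ((p j)! : ℚ)).prod ≠ 0 := by
      apply Multiset.prod_ne_zero
      intro hmem
      obtain ⟨p, -, hp⟩ := Multiset.mem_map.mp hmem
      exact (Finset.prod_ne_zero_iff.mpr fun j _ =>
        Nat.cast_ne_zero.mpr (Nat.factorial_ne_zero _)) hp
    have hk0 : ((Multiset.card P)! : ℚ) ≠ 0 := Nat.cast_ne_zero.mpr (Nat.factorial_ne_zero _)
    have hNval : (((fiber (Multiset.card P) P).card : ℚ))
        = ((Multiset.card P)! : ℚ) / ∏ x ∈ P.toFinset, ((P.count x)! : ℚ) :=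
      (eq_div_iff hm0).mpr hNQ
    rw [← Nat.cast_smul_eq_nsmul ℚ ((fiber (Multiset.card P) P).card)]
    rw [smul_smul, smul_smul, mul_smul_comm, smul_smul]
    congr 1
    rw [hNval]
    field_simp
    try ring
  rw [hH i, Finset.smul_sum, Finset.sum_congr rfl step2]
  have hdisj : (↑(Finset.range ((∑ j, i j) + 1)) : Set ℕ).PairwiseDisjoint T := by
    intro k _ k' _ hne
    refine Finset.disjoint_left.mpr fun {P} hPk hPk' => hne ?_
    rw [← (hT k P hPk).2.2, (hT k' P hPk').2.2]
  rw [← Finset.sum_biUnion hdisj]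
  refine (finsum_cond_eq_sum_of_cond_iff _ ?_).symm
  intro P _
  constructor
  · rintro ⟨h0, hs⟩
    refine Finset.mem_biUnion.mpr ⟨Multiset.card P, ?_, hT' P h0 hs⟩
    rw [Finset.mem_range]
    have := card_le_deg h0
    rw [hs] at this
    omega
  · intro hP
    obtain ⟨k, -, hPk⟩ := Finset.mem_biUnion.mp hP
    exact ⟨(hT k P hPk).1, (hT k P hPk).2.1⟩
end

section
/- Let f(s₁,...,sₙ) = 1 + Σ a_j s^j/j! be an n-variate exponential power series and let G₁,...,Gₙ be m-variate exponential power series each with constant term 1. The generalized Bell polynomials B_i(x₁,...,xₙ) defined by exp( Σ_{k=1}^{n} x_k (G_k(t) − 1) ) = Σ_i B_i(x₁,...,xₙ) t^i/i! satisfy: substituting for x₁^{j₁}···xₙ^{jₙ} the coefficient a_j of f yields the coefficient of t^i/i! in the composition f(G₁(t)−1, ..., Gₙ(t)−1). -/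
open Nat MvPowerSeries

section aux
variable {R : Type*} [CommRing R] {m : ℕ}

lemma van_mul (g h : MvPowerSeries (Fin m) R) (p q : ℕ)
    (hg : ∀ d : Fin m →₀ ℕ, (∑ x, d x) < p → MvPowerSeries.coeff d g = 0)
    (hh : ∀ d : Fin m →₀ ℕ, (∑ x, d x) < q → MvPowerSeries.coeff d h = 0) :
    ∀ d : Fin m →₀ ℕ, (∑ x, d x) < p + q → MvPowerSeries.coeff d (g * h) = 0 := by
  classical
  intro d hd
  rw [MvPowerSeries.coeff_mul]
  refine Finset.sum_eq_zero fun pr hpr => ?_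
  rw [Finset.HasAntidiagonal.mem_antidiagonal] at hpr
  have hsum : (∑ x, pr.1 x) + (∑ x, pr.2 x) = ∑ x, d x := by
    rw [← Finset.sum_add_distrib]
    exact Finset.sum_congr rfl fun x _ => by rw [← hpr]; rfl
  rcases lt_or_ge (∑ x, pr.1 x) p with h | h
  · rw [hg _ h, zero_mul]
  · rw [hh _ (by omega), mul_zero]

lemma van_one (f : MvPowerSeries (Fin m) R)
    (hf : MvPowerSeries.constantCoeff f = 0) :
    ∀ d : Fin m →₀ ℕ, (∑ x, d x) < 1 → MvPowerSeries.coeff d f = 0 := by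
  intro d hd
  have hd0 : d = 0 := by
    ext x
    have := Finset.sum_eq_zero_iff.mp (Nat.lt_one_iff.mp hd) x (Finset.mem_univ x)
    simpa using this
  rw [hd0, MvPowerSeries.coeff_zero_eq_constantCoeff, hf]

lemma van_pow (f : MvPowerSeries (Fin m) R)
    (hf : MvPowerSeries.constantCoeff f = 0) (p : ℕ) :
    ∀ d : Fin m →₀ ℕ, (∑ x, d x) < p → MvPowerSeries.coeff d (f ^ p) = 0 := by
  induction p with
  | zero => intro d hd; omega
  | succ p ih =>
      intro d hd
      rw [pow_succ]
      exact van_mul _ _ p 1 ih (van_one f hf) d (by omega)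

lemma van_prod {n : ℕ} (F : Fin n → MvPowerSeries (Fin m) R)
    (hF : ∀ k, MvPowerSeries.constantCoeff (F k) = 0) (j : Fin n → ℕ)
    (s : Finset (Fin n)) :
    ∀ d : Fin m →₀ ℕ, (∑ x, d x) < (∑ k ∈ s, j k) →
      MvPowerSeries.coeff d (∏ k ∈ s, F k ^ j k) = 0 := by
  classical
  induction s using Finset.induction with
  | empty => intro d hd; simp at hd
  | insert _ _ hks ih =>
      rename_i k s
      intro d hd
      rw [Finset.prod_insert hks]
      rw [Finset.sum_insert hks] at hd
      exact van_mul _ _ (j k) (∑ k ∈ s, j k) (van_pow _ (hF k) _) ih d hd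

end aux

section umbral
variable {R : Type*} [CommRing R] {n : ℕ}

lemma umbral_subset (a : (Fin n →₀ ℕ) → R) (p : MvPolynomial (Fin n) R)
    (s : Finset (Fin n →₀ ℕ)) (h : p.support ⊆ s) :
    ∑ j ∈ p.support, p.coeff j * a j = ∑ j ∈ s, p.coeff j * a j :=
  Finset.sum_subset h fun x _ hx => by
    rw [MvPolynomial.notMem_support_iff.mp hx, zero_mul]

/-- The umbral evaluation map, as an additive monoid hom. -/
def umbralHom (a : (Fin n →₀ ℕ) → R) : MvPolynomial (Fin n) R →+ R where
  toFun p := ∑ j ∈ p.support, p.coeff j * a j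
  map_zero' := by simp
  map_add' p q := by
    classical
    show (∑ j ∈ (p+q).support, (p+q).coeff j * a j) =
      (∑ j ∈ p.support, p.coeff j * a j) + (∑ j ∈ q.support, q.coeff j * a j)
    rw [umbral_subset a (p + q) (p.support ∪ q.support) (MvPolynomial.support_add),
      umbral_subset a p (p.support ∪ q.support) Finset.subset_union_left,
      umbral_subset a q (p.support ∪ q.support) Finset.subset_union_right,
      ← Finset.sum_add_distrib]
    exact Finset.sum_congr rfl fun j _ => by rw [MvPolynomial.coeff_add, add_mul]

lemma umbralHom_apply (a : (Fin n →₀ ℕ) → R) (p : MvPolynomial (Fin n) R) :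
    umbralHom a p = ∑ j ∈ p.support, p.coeff j * a j := rfl

lemma umbralHom_smul [Algebra ℚ R] (a : (Fin n →₀ ℕ) → R) (q : ℚ)
    (p : MvPolynomial (Fin n) R) :
    umbralHom a (q • p) = q • umbralHom a p := by
  rw [umbralHom_apply, umbralHom_apply,
    umbral_subset a (q • p) p.support (MvPolynomial.support_smul),
    Finset.smul_sum]
  exact Finset.sum_congr rfl fun j _ => by
    rw [MvPolynomial.coeff_smul, smul_mul_assoc]

lemma umbralHom_monomial (a : (Fin n →₀ ℕ) → R) (j : Fin n →₀ ℕ) (c : R) :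
    umbralHom a (MvPolynomial.monomial j c) = c * a j := by
  classical
  rcases eq_or_ne c 0 with rfl | hc
  · simp [umbralHom_apply]
  · rw [umbralHom_apply, MvPolynomial.support_monomial, if_neg hc, Finset.sum_singleton,
      MvPolynomial.coeff_monomial, if_pos rfl]

end umbral

/-- **Generalized Bell polynomials and the general multivariate Faà di Bruno formula.**
Let `f(s₁, ..., sₙ) = 1 + ∑ a_j s^j / j!` be an `n`-variate exponential power series and
`G₁, ..., Gₙ` be `m`-variate exponential power series with constant term `1`. The
generalized Bell polynomial `B i ∈ R[x₁, ..., xₙ]` is `i!` times the coefficient of `t^i`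
in `E = exp(∑_k x_k (G_k(t) - 1))` (the exponential computed coefficientwise as
`∑_l coeff i (C^l) / l!`, truncated at `l = |i|`, with
`C = ∑_k x_k (G_k - 1)` over the polynomial ring). The umbral evaluation substituting
`a j` for each monomial `x^j` in `B i` yields `i!` times the coefficient of `t^i` in the
formal composition `H = f(G₁ - 1, ..., Gₙ - 1)`, whose coefficients are
`coeff i H = ∑_j (a j / j!) ⬝ coeff i (∏_k (G_k - 1)^{j_k})`. -/
theorem stmt13 {R : Type*} [CommRing R] [Algebra ℚ R] {n m : ℕ}
    (a : (Fin n →₀ ℕ) → R) (ha : a 0 = 1)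
    (G : Fin n → MvPowerSeries (Fin m) R)
    (hG : ∀ k, MvPowerSeries.constantCoeff (G k) = 1)
    (C : MvPowerSeries (Fin m) (MvPolynomial (Fin n) R))
    (hC : C = ∑ k, MvPowerSeries.C (MvPolynomial.X k) *
      MvPowerSeries.map (MvPolynomial.C : R →+* MvPolynomial (Fin n) R) (G k - 1))
    (E : MvPowerSeries (Fin m) (MvPolynomial (Fin n) R))
    (hE : ∀ i : Fin m →₀ ℕ,
      MvPowerSeries.coeff i E =
        ∑ l ∈ Finset.range ((∑ j, i j) + 1),
          ((l ! : ℚ)⁻¹) • MvPowerSeries.coeff i (C ^ l))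
    (B : (Fin m →₀ ℕ) → MvPolynomial (Fin n) R)
    (hB : ∀ i : Fin m →₀ ℕ,
      B i = (∏ j, ((i j)! : ℚ)) • MvPowerSeries.coeff i E)
    (H : MvPowerSeries (Fin m) R)
    (hH : ∀ i : Fin m →₀ ℕ,
      MvPowerSeries.coeff i H =
        ∑ᶠ j : Fin n →₀ ℕ,
          ((∏ k, ((j k)! : ℚ))⁻¹) •
            (a j * MvPowerSeries.coeff i (∏ k, (G k - 1) ^ j k)))
    (i : Fin m →₀ ℕ) :
    ∑ j ∈ (B i).support, (B i).coeff j * a j =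
      (∏ j, ((i j)! : ℚ)) • MvPowerSeries.coeff i H := by
  classical
  have hF0 : ∀ k, MvPowerSeries.constantCoeff (G k - 1) = 0 := fun k => by
    simp [hG k]
  set N := ∑ j, i j with hN
  -- key computation: umbral evaluation of coefficients of C ^ l
  have key : ∀ l : ℕ, umbralHom a (MvPowerSeries.coeff i (C ^ l)) =
      ∑ d ∈ Finset.piAntidiag Finset.univ l,
        (Nat.multinomial Finset.univ d) •
          (a (Finsupp.equivFunOnFinite.symm d) *
            MvPowerSeries.coeff i (∏ k, (G k - 1) ^ d k)) := by
    intro l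
    rw [hC, Finset.sum_pow_eq_sum_piAntidiag, map_sum, map_sum]
    refine Finset.sum_congr rfl fun d hd => ?_
    have h1 : (∏ k, (MvPowerSeries.C (MvPolynomial.X k) *
        MvPowerSeries.map (MvPolynomial.C : R →+* MvPolynomial (Fin n) R)
          (G k - 1)) ^ d k)
        = MvPowerSeries.C (∏ k, MvPolynomial.X k ^ d k) *
          MvPowerSeries.map (MvPolynomial.C : R →+* MvPolynomial (Fin n) R)
            (∏ k, (G k - 1) ^ d k) := by
      rw [map_prod, map_prod, ← Finset.prod_mul_distrib]
      exact Finset.prod_congr rfl fun k _ => by rw [mul_pow, map_pow, map_pow]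
    rw [h1, ← nsmul_eq_mul, map_nsmul, map_nsmul]
    congr 1
    rw [MvPowerSeries.coeff_C_mul, MvPowerSeries.coeff_map]
    have h2 : (∏ k, (MvPolynomial.X k : MvPolynomial (Fin n) R) ^ d k) *
        MvPolynomial.C (MvPowerSeries.coeff i (∏ k, (G k - 1) ^ d k)) =
        MvPolynomial.monomial (Finsupp.equivFunOnFinite.symm d)
          (MvPowerSeries.coeff i (∏ k, (G k - 1) ^ d k)) := by
      rw [MvPolynomial.monomial_eq, Finsupp.prod_fintype _ _ (fun k => pow_zero _), mul_comm]
      simp [Finsupp.coe_equivFunOnFinite_symm]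
    rw [h2, umbralHom_monomial, mul_comm]
  have hLHS : (∑ j ∈ (B i).support, (B i).coeff j * a j) = umbralHom a (B i) := rfl
  rw [hLHS, hB i, umbralHom_smul, hE i, map_sum]
  congr 1
  have step : ∀ l ∈ Finset.range (N + 1),
      umbralHom a (((l ! : ℚ)⁻¹) • MvPowerSeries.coeff i (C ^ l)) =
      ∑ d ∈ Finset.piAntidiag (Finset.univ : Finset (Fin n)) l,
        ((∏ k, ((d k)! : ℚ))⁻¹) • (a (Finsupp.equivFunOnFinite.symm d) *
          MvPowerSeries.coeff i (∏ k, (G k - 1) ^ d k)) := by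
    intro l _
    rw [umbralHom_smul, key l, Finset.smul_sum]
    refine Finset.sum_congr rfl fun d hd => ?_
    rw [Finset.mem_piAntidiag] at hd
    rw [← Nat.cast_smul_eq_nsmul ℚ, smul_smul]
    congr 1
    have hspec := Nat.multinomial_spec Finset.univ d
    have h1 : ((l)! : ℚ) = (∏ k, ((d k)! : ℚ)) * (Nat.multinomial Finset.univ d : ℚ) := by
      rw [← hd.1]
      push_cast [← hspec]
      ring
    have h2 : (∏ k, ((d k)! : ℚ)) ≠ 0 :=
      Finset.prod_ne_zero_iff.mpr fun k _ => Nat.cast_ne_zero.mpr (Nat.factorial_ne_zero _)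
    have hm : (Nat.multinomial Finset.univ d : ℚ) ≠ 0 :=
      Nat.cast_ne_zero.mpr (Nat.multinomial_pos _ _).ne'
    rw [h1, mul_inv, mul_assoc, inv_mul_cancel₀ hm, mul_one]
  rw [Finset.sum_congr rfl step]
  have hdisj : Set.PairwiseDisjoint (Finset.range (N + 1) : Set ℕ)
      (fun l => Finset.piAntidiag (Finset.univ : Finset (Fin n)) l) := by
    intro l1 _ l2 _ hne
    rw [Function.onFun, Finset.disjoint_left]
    intro d h1 h2
    rw [Finset.mem_piAntidiag] at h1 h2
    exact hne (h1.1 ▸ h2.1 ▸ rfl)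
  rw [← Finset.sum_biUnion hdisj, hH i,
    ← finsum_comp_equiv (Finsupp.equivFunOnFinite : (Fin n →₀ ℕ) ≃ (Fin n → ℕ)).symm]
  rw [finsum_eq_sum_of_support_subset _ (s := (Finset.range (N + 1)).biUnion
      (fun l => Finset.piAntidiag (Finset.univ : Finset (Fin n)) l)) ?_]
  · exact Finset.sum_congr rfl fun d _ => rfl
  · intro d hd
    simp only [Function.mem_support] at hd
    simp only [Finset.coe_biUnion, Finset.coe_range, Set.mem_iUnion, Finset.mem_coe,
      Finset.mem_piAntidiag, Set.mem_Iio]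
    refine ⟨∑ k, d k, ?_, rfl, fun _ _ => Finset.mem_univ _⟩
    by_contra hlt
    apply hd
    have hvan : MvPowerSeries.coeff i
        (∏ k, (G k - 1) ^ (Finsupp.equivFunOnFinite.symm d) k) = 0 := by
      exact van_prod (fun k => G k - 1) hF0 d Finset.univ i (by omega)
    rw [hvan, mul_zero, smul_zero]
end
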